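/- Let Z be an integral domain, p a prime element of Z, and P_1,…,P_s ∈ Z[T_1,…,T_k,Y_1,…,Y_n] polynomials whose product Π = P_1⋯P_s is not divisible by p. For each i, suppose 2^{ℓ_i + 1} > deg_{T_i}(Π) where ℓ_i + 1 is the number of monic monomials Y_1^{r_1}⋯Y_n^{r_n} with r_j ≤ d_{ij}. Then there exist polynomials M_1,…,M_k ∈ Z[Y] (each an Z-linear combination of those monomials) such that Π(M_1(Y),…,M_k(Y),Y) is not divisible by p. -/

import Mathlib

open MvPolynomial

private lemma aux_coeff_sum_monomial_one {R : Type*} [CommSemiring R] {n : ℕ}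
    (A : Finset (Fin n →₀ ℕ)) (m : Fin n →₀ ℕ) :
    coeff m (∑ m' ∈ A, monomial m' (1 : R)) = if m ∈ A then 1 else 0 := by
  classical
  rw [coeff_sum]
  simp_rw [coeff_monomial]
  exact Finset.sum_ite_eq' A m (fun _ => 1)

private lemma aux_degreeOf_monomial_le {R σ : Type*} [CommSemiring R]
    (m : σ →₀ ℕ) (a : R) (i : σ) : degreeOf i (monomial m a) ≤ m i := by
  rw [degreeOf_eq_sup]
  refine Finset.sup_le fun m' hm' => ?_
  have := MvPolynomial.support_monomial_subset hm'
  simp only [Finset.mem_singleton] at this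
  subst this
  exact le_rfl

private lemma aux_degreeOf_sumToIter_le {R σ τ : Type*} [CommSemiring R]
    (f : MvPolynomial (σ ⊕ τ) R) (i : σ) :
    degreeOf i (sumToIter R σ τ f) ≤ degreeOf (Sum.inl i) f := by
  classical
  have key : ∀ (m : (σ ⊕ τ) →₀ ℕ) (a : R),
      degreeOf i (sumToIter R σ τ (monomial m a)) ≤ m (Sum.inl i) := by
    intro m a
    rw [monomial_eq, Finsupp.prod, map_mul, map_prod, sumToIter_C]
    refine le_trans (degreeOf_mul_le _ _ _) ?_
    rw [degreeOf_C, zero_add]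
    refine le_trans (degreeOf_prod_le _ _ _) ?_
    have hterm : ∀ s ∈ m.support,
        degreeOf i ((sumToIter R σ τ) (X s ^ m s)) ≤ if s = Sum.inl i then m s else 0 := by
      intro s _
      rcases s with s | s
      · rw [map_pow, sumToIter_Xl, X_pow_eq_monomial]
        refine le_trans (aux_degreeOf_monomial_le _ _ _) ?_
        rw [Finsupp.single_apply]
        split_ifs <;> simp_all
      · rw [map_pow, sumToIter_Xr, ← map_pow, degreeOf_C]
        simp
    refine le_trans (Finset.sum_le_sum hterm) ?_
    rw [Finset.sum_ite_eq' m.support (Sum.inl i) (fun s => m s)]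
    split_ifs <;> simp
  conv_lhs => rw [f.as_sum, map_sum]
  refine le_trans (degreeOf_sum_le _ _ _) ?_
  rw [degreeOf_eq_sup, Finset.sup_le_iff]
  intro m hm
  exact le_trans (key m (coeff m f)) (Finset.le_sup (f := fun m => m (Sum.inl i)) hm)

private lemma aux_eval_sumToIter {R : Type*} [CommSemiring R] {k n : ℕ}
    (x : Fin k → MvPolynomial (Fin n) R) (f : MvPolynomial (Fin k ⊕ Fin n) R) :
    eval x (sumToIter R (Fin k) (Fin n) f) = aeval (Sum.elim x X) f := by
  induction f using MvPolynomial.induction_on with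
  | C a => simp [sumToIter_C, algebraMap_eq]
  | add p q hp hq => simp [map_add, hp, hq]
  | mul_X p s hp => cases s <;> simp [map_mul, hp, sumToIter_Xl, sumToIter_Xr]

private lemma aux_map_aeval_elim {Z R : Type*} [CommRing Z] [CommRing R] (π : Z →+* R)
    {k n : ℕ} (M : Fin k → MvPolynomial (Fin n) Z) (f : MvPolynomial (Fin k ⊕ Fin n) Z) :
    map π (aeval (Sum.elim M X) f)
      = aeval (Sum.elim (fun i => map π (M i)) X) (map π f) := by
  induction f using MvPolynomial.induction_on with
  | C a => simp [algebraMap_eq, map_C]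
  | add p q hp hq => simp only [map_add, hp, hq]
  | mul_X p s hp =>
      cases s <;>
        simp only [map_mul, aeval_X, map_X, Sum.elim_inl, Sum.elim_inr, hp]

private lemma aux_exists_eval_ne_zero_uni {D : Type*} [CommRing D] [IsDomain D]
    (P : Polynomial D) (hP : P ≠ 0) (s : Finset D) (h : P.natDegree < s.card) :
    ∃ a ∈ s, Polynomial.eval a P ≠ 0 := by
  classical
  by_contra hc
  push_neg at hc
  have hsub : s ⊆ P.roots.toFinset := by
    intro a ha
    rw [Multiset.mem_toFinset, Polynomial.mem_roots hP]
    exact hc a ha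
  have := (Finset.card_le_card hsub).trans
    ((Multiset.toFinset_card_le _).trans (Polynomial.card_roots' P))
  omega

private lemma aux_exists_eval_ne_zero_mv {D : Type*} [CommRing D] [IsDomain D] :
    ∀ (k : ℕ) (F : MvPolynomial (Fin k) D), F ≠ 0 → ∀ (V : Fin k → Finset D),
      (∀ i, degreeOf i F < (V i).card) →
      ∃ x : Fin k → D, (∀ i, x i ∈ V i) ∧ eval x F ≠ 0
  | 0, F, hF, V, _ => by
      refine ⟨Fin.elim0, fun i => i.elim0, ?_⟩
      rw [eq_C_of_isEmpty F] at hF ⊢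
      rw [eval_C]
      intro h
      exact hF (by rw [h, map_zero])
  | (k + 1), F, hF, V, hV => by
      classical
      set q := finSuccEquiv D k F with hqdef
      have hq0 : q ≠ 0 := fun h => hF (by apply (finSuccEquiv D k).injective; rw [map_zero]; exact h)
      have hdeg0 : q.natDegree = degreeOf 0 F := natDegree_finSuccEquiv F
      have hc : q.leadingCoeff ≠ 0 := Polynomial.leadingCoeff_ne_zero.mpr hq0
      have hcd : ∀ i : Fin k, degreeOf i q.leadingCoeff < (V i.succ).card := fun i =>
        lt_of_le_of_lt (degreeOf_coeff_finSuccEquiv F i q.natDegree) (hV i.succ)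
      obtain ⟨x', hx', hne⟩ :=
        aux_exists_eval_ne_zero_mv k q.leadingCoeff hc (fun i => V i.succ) hcd
      set q' := q.map (eval x') with hq'def
      have hq'0 : q' ≠ 0 := by
        intro h
        apply hne
        have := congrArg (fun r => Polynomial.coeff r q.natDegree) h
        simpa [hq'def, Polynomial.coeff_map] using this
      have hdq' : q'.natDegree < (V 0).card :=
        lt_of_le_of_lt Polynomial.natDegree_map_le (hdeg0 ▸ hV 0)
      obtain ⟨a, ha, hae⟩ := aux_exists_eval_ne_zero_uni q' hq'0 (V 0) hdq'
      refine ⟨Fin.cons a x', ?_, ?_⟩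
      · intro i
        refine Fin.cases ?_ ?_ i
        · exact ha
        · intro j; simpa using hx' j
      · rw [eval_eq_eval_mv_eval']
        exact hae

theorem stmt_9 {Z : Type*} [CommRing Z] [IsDomain Z] (p : Z) (hp : Prime p)
    (k n s : ℕ) (P : Fin s → MvPolynomial (Fin k ⊕ Fin n) Z)
    (d : Fin k → Fin n → ℕ)
    (hdiv : ¬ ∀ m, p ∣ coeff m (∏ i, P i))
    (hdeg : ∀ i : Fin k, degreeOf (Sum.inl i) (∏ j, P j) < 2 ^ (∏ j, (d i j + 1))) :
    ∃ M : Fin k → MvPolynomial (Fin n) Z,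
      (∀ i, ∀ m ∈ (M i).support, ∀ j, m j ≤ d i j) ∧
      ¬ ∀ m : Fin n →₀ ℕ,
        p ∣ coeff m (aeval (Sum.elim M X) (∏ i, P i) : MvPolynomial (Fin n) Z) := by
  classical
  set Φ := ∏ i, P i with hΦ
  set I := Ideal.span ({p} : Set Z) with hI
  haveI hIp : I.IsPrime := (Ideal.span_singleton_prime hp.ne_zero).mpr hp
  haveI : IsDomain (Z ⧸ I) := by
    rw [Ideal.Quotient.isDomain_iff_prime]; exact hIp
  set π : Z →+* Z ⧸ I := Ideal.Quotient.mk I with hπ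
  set f := map π Φ with hf
  have hf0 : f ≠ 0 := by
    intro h
    apply hdiv
    intro m
    have hz : π (coeff m Φ) = 0 := by
      rw [← coeff_map, ← hf, h, coeff_zero]
    exact (Ideal.Quotient.eq_zero_iff_dvd p _).mp hz
  set dF : Fin k → (Fin n →₀ ℕ) := fun i => Finsupp.equivFunOnFinite.symm (fun j => d i j)
    with hdF
  set box : Fin k → Finset (Fin n →₀ ℕ) := fun i => Finset.Iic (dF i) with hbox
  have hboxcard : ∀ i, (box i).card = ∏ j, (d i j + 1) := by
    intro i
    rw [hbox]
    simp only [Finsupp.card_Iic]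
    have : ∀ j, (Finset.Iic ((dF i) j)).card = d i j + 1 := by
      intro j; rw [Nat.card_Iic]; rfl
    simp_rw [this]
    refine Finset.prod_subset (Finset.subset_univ _) ?_
    intro j _ hj
    have : dF i j = 0 := Finsupp.notMem_support_iff.mp hj
    have hd : d i j = 0 := this
    omega
  set V : Fin k → Finset (MvPolynomial (Fin n) (Z ⧸ I)) :=
    fun i => (box i).powerset.image (fun A => ∑ m ∈ A, monomial m (1 : Z ⧸ I)) with hV
  have hVcard : ∀ i, (V i).card = 2 ^ ∏ j, (d i j + 1) := by
    intro i
    rw [hV]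
    rw [Finset.card_image_of_injOn, Finset.card_powerset, hboxcard]
    intro A _ B _ hAB
    ext m
    have hcoeff := congrArg (coeff m) hAB
    rw [aux_coeff_sum_monomial_one, aux_coeff_sum_monomial_one] at hcoeff
    by_cases h1 : m ∈ A <;> by_cases h2 : m ∈ B <;>
      simp [h1, h2] at hcoeff ⊢
  set F := sumToIter (Z ⧸ I) (Fin k) (Fin n) f with hF
  have hF0 : F ≠ 0 := by
    intro h
    exact hf0 ((sumRingEquiv (Z ⧸ I) (Fin k) (Fin n)).injective
      (by
        have heq : ∀ g, (sumRingEquiv (Z ⧸ I) (Fin k) (Fin n)) g = sumToIter (Z ⧸ I) (Fin k) (Fin n) g := by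
          intro g
          induction g using MvPolynomial.induction_on with
          | C a => simp [sumToIter_C]
          | add p q hp hq => simp [map_add, hp, hq]
          | mul_X p s hp => cases s <;> simp [map_mul, hp, sumToIter_Xl, sumToIter_Xr]
        rw [map_zero]; exact (heq f).trans h))
  have hdmap : ∀ t, degreeOf t f ≤ degreeOf t Φ := by
    intro t
    rw [degreeOf_eq_sup, degreeOf_eq_sup]
    exact Finset.sup_mono (support_map_subset _ _)
  have hdegF : ∀ i, degreeOf i F < (V i).card := by
    intro i
    rw [hVcard i]
    exact lt_of_le_of_lt
      (le_trans (aux_degreeOf_sumToIter_le f i) (hdmap (Sum.inl i))) (hdeg i)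
  obtain ⟨x, hxV, hxe⟩ := aux_exists_eval_ne_zero_mv k F hF0 V hdegF
  have hx' : ∀ i, ∃ A, A ⊆ box i ∧ (∑ m ∈ A, monomial m (1 : Z ⧸ I)) = x i := by
    intro i
    obtain ⟨A, hA, hAx⟩ := Finset.mem_image.mp (hxV i)
    exact ⟨A, Finset.mem_powerset.mp hA, hAx⟩
  choose A hA hAx using hx'
  refine ⟨fun i => ∑ m ∈ A i, monomial m (1 : Z), ?_, ?_⟩
  · intro i m hm j
    have hmA : m ∈ A i := by
      by_contra hmA
      have hcz := aux_coeff_sum_monomial_one (R := Z) (A i) m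
      rw [if_neg hmA] at hcz
      exact (MvPolynomial.mem_support_iff.mp hm) hcz
    have hmbox : m ∈ box i := hA i hmA
    have hle : m ≤ dF i := Finset.mem_Iic.mp hmbox
    exact hle j
  · intro hall
    apply hxe
    have hmapM : ∀ i, map π (∑ m ∈ A i, monomial m (1 : Z)) = x i := by
      intro i
      rw [map_sum]
      simp_rw [map_monomial, map_one]
      exact hAx i
    have h0 : map π (aeval (Sum.elim (fun i => ∑ m ∈ A i, monomial m (1 : Z)) X) Φ) = 0 := by
      ext m
      rw [coeff_map, coeff_zero]
      exact (Ideal.Quotient.eq_zero_iff_dvd p _).mpr (hall m)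
    rw [aux_map_aeval_elim] at h0
    rw [hF, aux_eval_sumToIter]
    rw [show (Sum.elim x X : Fin k ⊕ Fin n → MvPolynomial (Fin n) (Z ⧸ I))
        = Sum.elim (fun i => map π (∑ m ∈ A i, monomial m (1 : Z))) X from by
      rw [funext hmapM]]
    exact h0
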